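/- Let n ≥ 2 and d ≥ 1, and let |Ψ⟩ = Σ c_{i_1 i_2 ⋯ i_n} |i_1⟩⊗⋯⊗|i_n⟩ be a normalized n-qudit pure state, where each index ranges over {1,…,d}. For a = 1,…,n let λ_1^{(a)} ≤ λ_2^{(a)} ≤ ⋯ ≤ λ_d^{(a)} be the increasingly ordered eigenvalues of the a-th one-particle reduced density matrix. Then Σ_{a=1}^{n-1} Σ_{i=1}^{d-1} λ_i^{(a)} ≥ Σ_{i=1}^{d-1} λ_i^{(n)}. -/

import Mathlib

open scoped BigOperators

/-- The one-particle reduced density matrix of the `a`-th qudit of an `n`-qudit state. -/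
noncomputable def rdm {n d : ℕ} (c : (Fin n → Fin d) → ℂ) (a : Fin n) :
    Matrix (Fin d) (Fin d) ℂ :=
  Matrix.of fun i i' =>
    ∑ g : { b : Fin n // b ≠ a } → Fin d,
      c (fun b => if h : b = a then i else g ⟨b, h⟩) *
        (starRingEnd ℂ) (c (fun b => if h : b = a then i' else g ⟨b, h⟩))

section Spectral
open Matrix

lemma conj_mul_self_eq (z : ℂ) : (starRingEnd ℂ) z * z = ((‖z‖ ^ 2 : ℝ) : ℂ) := by
  rw [mul_comm, Complex.mul_conj]
  norm_cast
  rw [Complex.normSq_eq_norm_sq]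

lemma sum_eig_eq_trace {m : ℕ} (A : Matrix (Fin m) (Fin m) ℂ) (hA : A.IsHermitian) :
    (∑ i, hA.eigenvalues i : ℂ) = A.trace := by
  nth_rewrite 2 [hA.spectral_theorem]
  rw [Unitary.conjStarAlgAut_apply, Matrix.trace_mul_cycle,
    (Matrix.mem_unitaryGroup_iff').mp (hA.eigenvectorUnitary).2, Matrix.one_mul,
    Matrix.trace_diagonal]
  push_cast
  rfl

lemma rayleigh_le {m : ℕ} (A : Matrix (Fin m) (Fin m) ℂ) (hA : A.IsHermitian) (μ : ℝ)
    (hμ : ∀ i, hA.eigenvalues i ≤ μ) (x : Fin m → ℂ) :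
    (star x ⬝ᵥ (A *ᵥ x)).re ≤ μ * ∑ i, ‖x i‖ ^ 2 := by
  set U : Matrix (Fin m) (Fin m) ℂ := (hA.eigenvectorUnitary : Matrix (Fin m) (Fin m) ℂ) with hU
  set y : Fin m → ℂ := star U *ᵥ x with hy
  have hUU : U * star U = 1 := (Matrix.mem_unitaryGroup_iff).mp (hA.eigenvectorUnitary).2
  have hstary : star y = star x ᵥ* U := by
    rw [hy, star_mulVec, star_eq_conjTranspose, conjTranspose_conjTranspose]
  have hxy : star x ⬝ᵥ (A *ᵥ x) = star y ⬝ᵥ ((Matrix.diagonal (Complex.ofReal ∘ hA.eigenvalues)) *ᵥ y) := by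
    nth_rewrite 1 [hA.spectral_theorem]
    rw [Unitary.conjStarAlgAut_apply, ← Matrix.mulVec_mulVec, ← Matrix.mulVec_mulVec, hstary,
      ← Matrix.dotProduct_mulVec]
    rfl
  have hny : ∑ i, ‖y i‖ ^ 2 = ∑ i, ‖x i‖ ^ 2 := by
    have h1 : star y ⬝ᵥ y = star x ⬝ᵥ x := by
      rw [hstary, hy, ← Matrix.dotProduct_mulVec, Matrix.mulVec_mulVec, hUU, Matrix.one_mulVec]
    have h2 : ((∑ i, ‖y i‖ ^ 2 : ℝ) : ℂ) = ((∑ i, ‖x i‖ ^ 2 : ℝ) : ℂ) := by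
      push_cast
      simpa only [dotProduct, Pi.star_apply, Complex.star_def, conj_mul_self_eq,
        Complex.ofReal_pow] using h1
    exact_mod_cast h2
  have hexp : star y ⬝ᵥ ((Matrix.diagonal (Complex.ofReal ∘ hA.eigenvalues)) *ᵥ y)
      = ((∑ i, hA.eigenvalues i * ‖y i‖ ^ 2 : ℝ) : ℂ) := by
    push_cast
    rw [dotProduct]
    congr 1; ext i
    rw [Matrix.mulVec_diagonal, Pi.star_apply, Function.comp_apply,
      show star (y i) * ((hA.eigenvalues i : ℂ) * y i)
        = (hA.eigenvalues i : ℂ) * (star (y i) * y i) by ring,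
      Complex.star_def, conj_mul_self_eq]
    push_cast
    ring
  rw [hxy, hexp]
  rw [Complex.ofReal_re, ← hny, Finset.mul_sum]
  apply Finset.sum_le_sum
  intro i _
  exact mul_le_mul_of_nonneg_right (hμ i) (by positivity)

end Spectral

namespace QRDM
variable {m q : ℕ}

/-- inner product of coefficient vectors -/
noncomputable def ip (v w : (Fin m → Fin q) → ℂ) : ℂ :=
  ∑ j, (starRingEnd ℂ) (v j) * w j

/-- squared norm -/
noncomputable def nsq (v : (Fin m → Fin q) → ℂ) : ℝ := ∑ j, ‖v j‖ ^ 2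

/-- local projector onto φ at site a, tensored with identity -/
noncomputable def p (a : Fin m) (φ : Fin q → ℂ) (v : (Fin m → Fin q) → ℂ) :
    (Fin m → Fin q) → ℂ :=
  fun j => φ (j a) * ∑ i, (starRingEnd ℂ) (φ i) * v (Function.update j a i)

lemma conj_mul_self_eq' (z : ℂ) : (starRingEnd ℂ) z * z = ((‖z‖ : ℂ)) ^ 2 := by
  rw [mul_comm, Complex.mul_conj]; norm_cast; rw [Complex.normSq_eq_norm_sq]

lemma csum {ι : Type*} [Fintype ι] (x y : ι → ℂ) :
    ‖∑ i, (starRingEnd ℂ) (x i) * y i‖ ^ 2 ≤ (∑ i, ‖x i‖ ^ 2) * (∑ i, ‖y i‖ ^ 2) := by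
  have h := norm_inner_le_norm (𝕜 := ℂ) (E := EuclideanSpace ℂ ι)
    ((WithLp.equiv 2 _).symm x) ((WithLp.equiv 2 _).symm y)
  rw [PiLp.inner_apply] at h
  simp only [RCLike.inner_apply] at h
  have hx : ‖(WithLp.equiv 2 (ι → ℂ)).symm x‖ ^ 2 = ∑ i, ‖x i‖ ^ 2 := by
    rw [EuclideanSpace.norm_eq, Real.sq_sqrt (by positivity)]; rfl
  have hy : ‖(WithLp.equiv 2 (ι → ℂ)).symm y‖ ^ 2 = ∑ i, ‖y i‖ ^ 2 := by
    rw [EuclideanSpace.norm_eq, Real.sq_sqrt (by positivity)]; rfl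
  calc ‖∑ i, (starRingEnd ℂ) (x i) * y i‖ ^ 2
      ≤ (‖(WithLp.equiv 2 (ι → ℂ)).symm x‖ * ‖(WithLp.equiv 2 (ι → ℂ)).symm y‖) ^ 2 :=
        by simpa [mul_comm] using pow_le_pow_left₀ (norm_nonneg _) h 2
    _ = _ := by rw [mul_pow, hx, hy]

lemma ip_self (v : (Fin m → Fin q) → ℂ) : ip v v = ((nsq v : ℝ) : ℂ) := by
  rw [ip, nsq]; push_cast; congr 1; ext j; exact conj_mul_self_eq' _

lemma ip_comm (v w : (Fin m → Fin q) → ℂ) : ip w v = (starRingEnd ℂ) (ip v w) := by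
  rw [ip, ip, map_sum]; congr 1; ext j; rw [map_mul]; ring_nf; simp

lemma nsq_nonneg (v : (Fin m → Fin q) → ℂ) : 0 ≤ nsq v :=
  Finset.sum_nonneg fun _ _ => by positivity

lemma ip_sub_right (u v w : (Fin m → Fin q) → ℂ) : ip u (v - w) = ip u v - ip u w := by
  simp [ip, mul_sub, Finset.sum_sub_distrib]

lemma ip_sub_left (u v w : (Fin m → Fin q) → ℂ) : ip (v - w) u = ip v u - ip w u := by
  simp [ip, sub_mul, Finset.sum_sub_distrib]

lemma nsq_sub (v w : (Fin m → Fin q) → ℂ) :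
    nsq (v - w) = nsq v - 2 * (ip v w).re + nsq w := by
  have h : ((nsq (v - w) : ℝ) : ℂ) = ip (v - w) (v - w) := (ip_self _).symm
  have h2 : ip (v - w) (v - w) = ip v v - ip v w - ip w v + ip w w := by
    rw [ip_sub_left, ip_sub_right, ip_sub_right]
    ring
  have h3 := congrArg Complex.re (h.trans h2)
  simp only [Complex.ofReal_re, Complex.add_re, Complex.sub_re, Complex.conj_re, ip_self,
    ip_comm w v] at h3
  have h4 : (ip w v).re = (ip v w).re := by rw [ip_comm]; exact Complex.conj_re _
  rw [h3, h4]; ring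

-- involution for reindexing
def flipAt (a : Fin m) : (Fin m → Fin q) × Fin q → (Fin m → Fin q) × Fin q :=
  fun p => (Function.update p.1 a p.2, p.1 a)

lemma flipAt_involutive (a : Fin m) : Function.Involutive (flipAt (q := q) a) := by
  intro p
  simp [flipAt, Function.update_idem, Function.update_eq_self, Function.update_self]

lemma p_herm (a : Fin m) (φ : Fin q → ℂ) (v w : (Fin m → Fin q) → ℂ) :
    ip (p a φ v) w = ip v (p a φ w) := by
  rw [ip, ip]
  simp only [p, map_mul, map_sum, Finset.sum_mul, Finset.mul_sum, RingHomCompTriple.comp_apply,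
    RingHom.id_apply, starRingEnd_self_apply]
  rw [← Finset.sum_product']
  rw [← Finset.sum_product']
  refine Finset.sum_nbij' (fun p => flipAt a p) (fun p => flipAt a p) ?_ ?_ ?_ ?_ ?_ <;>
    intro x hx
  · exact Finset.mem_univ _
  · exact Finset.mem_univ _
  · exact flipAt_involutive a x
  · exact flipAt_involutive a x
  · simp only [flipAt]
    rw [Function.update_idem, Function.update_self, Function.update_eq_self]
    ring


lemma p_idem (a : Fin m) (φ : Fin q → ℂ) (hφ : ∑ i, ‖φ i‖ ^ 2 = 1)
    (v : (Fin m → Fin q) → ℂ) : p a φ (p a φ v) = p a φ v := by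
  funext j
  simp only [p, Function.update_idem, Function.update_self]
  rw [show ∑ i, (starRingEnd ℂ) (φ i) * (φ i * ∑ i', (starRingEnd ℂ) (φ i') * v (Function.update j a i'))
      = (∑ i, (starRingEnd ℂ) (φ i) * φ i) * ∑ i', (starRingEnd ℂ) (φ i') * v (Function.update j a i') by
    rw [Finset.sum_mul]; congr 1; ext i; ring]
  have : (∑ i, (starRingEnd ℂ) (φ i) * φ i) = 1 := by
    have : ∑ i, (starRingEnd ℂ) (φ i) * φ i = ((∑ i, ‖φ i‖ ^ 2 : ℝ) : ℂ) := by
      push_cast; congr 1; ext i; rw [conj_mul_self_eq']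
    rw [this, hφ]; norm_num
  rw [this, one_mul]

lemma p_comm {a b : Fin m} (hab : a ≠ b) (φ ψ : Fin q → ℂ) (v : (Fin m → Fin q) → ℂ) :
    p a φ (p b ψ v) = p b ψ (p a φ v) := by
  funext j
  simp only [p]
  simp only [Function.update_of_ne hab.symm, Function.update_of_ne hab]
  simp only [Finset.mul_sum]
  rw [Finset.sum_comm]
  congr 1; ext i'
  congr 1; ext i
  rw [Function.update_comm hab]
  ring

lemma p_sub (a : Fin m) (φ : Fin q → ℂ) (v w : (Fin m → Fin q) → ℂ) :
    p a φ (v - w) = p a φ v - p a φ w := by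
  funext j
  simp only [p, Pi.sub_apply, mul_sub, Finset.sum_sub_distrib]

lemma re_ip_p_self (a : Fin m) (φ : Fin q → ℂ) (hφ : ∑ i, ‖φ i‖ ^ 2 = 1)
    (v : (Fin m → Fin q) → ℂ) : (ip v (p a φ v)).re = nsq (p a φ v) := by
  have h : ip (p a φ v) (p a φ v) = ip v (p a φ v) := by
    rw [p_herm, p_idem a φ hφ]
  have := congrArg Complex.re ((ip_self (p a φ v)).symm.trans h)
  simpa using this.symm

lemma nsq_sub_p (a : Fin m) (φ : Fin q → ℂ) (hφ : ∑ i, ‖φ i‖ ^ 2 = 1)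
    (v : (Fin m → Fin q) → ℂ) : nsq (v - p a φ v) = nsq v - nsq (p a φ v) := by
  rw [nsq_sub, re_ip_p_self a φ hφ]; ring

lemma nsq_p_le (a : Fin m) (φ : Fin q → ℂ) (hφ : ∑ i, ‖φ i‖ ^ 2 = 1)
    (v : (Fin m → Fin q) → ℂ) : nsq (p a φ v) ≤ nsq v := by
  have h := nsq_sub_p a φ hφ v
  have h2 := nsq_nonneg (v - p a φ v)
  linarith

/-- Equivalence between `Fin q × ({b // b ≠ a} → Fin q)` and `Fin m → Fin q`. -/
def extEquiv (a : Fin m) : (Fin q × ({ b : Fin m // b ≠ a } → Fin q)) ≃ (Fin m → Fin q) where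
  toFun p := fun b => if h : b = a then p.1 else p.2 ⟨b, h⟩
  invFun j := (j a, fun b => j b.1)
  left_inv p := by
    refine Prod.ext (by simp) ?_
    funext b
    simp [b.2]
  right_inv j := by
    funext b
    by_cases h : b = a <;> simp [h]

lemma extEquiv_apply_self (a : Fin m) (i : Fin q) (g : { b : Fin m // b ≠ a } → Fin q) :
    extEquiv a (i, g) a = i := by simp [extEquiv]

lemma update_extEquiv (a : Fin m) (i i1 : Fin q) (g : { b : Fin m // b ≠ a } → Fin q) :
    Function.update (extEquiv a (i, g)) a i1 = extEquiv a (i1, g) := by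
  funext b
  by_cases h : b = a
  · subst h; simp [extEquiv]
  · simp [extEquiv, Function.update_of_ne h, h]

open Matrix in
lemma quadForm (c : (Fin m → Fin q) → ℂ) (a : Fin m) (φ : Fin q → ℂ) :
    ip c (p a φ c) = star φ ⬝ᵥ ((rdm c a) *ᵥ φ) := by
  rw [ip]
  simp only [p, Finset.mul_sum]
  rw [← Finset.sum_product', Finset.univ_product_univ]
  rw [← (Equiv.prodCongr (extEquiv (q := q) a) (Equiv.refl (Fin q))).sum_comp
    (fun x : (Fin m → Fin q) × Fin q => (starRingEnd ℂ) (c x.1) * (φ (x.1 a) * ((starRingEnd ℂ) (φ x.2) * c (Function.update x.1 a x.2))))]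
  rw [dotProduct]
  simp only [Matrix.mulVec, dotProduct, rdm, Matrix.of_apply, Pi.star_apply,
    Finset.sum_mul, Finset.mul_sum]
  rw [Finset.sum_comm]
  rw [← Finset.sum_product', Finset.univ_product_univ, ← Finset.sum_product',
    Finset.univ_product_univ]
  refine Fintype.sum_equiv
    ⟨fun x => ((x.1.1, x.2), x.1.2), fun y => ((y.1.1, y.2), y.1.2),
      fun _ => rfl, fun _ => rfl⟩ _ _ ?_
  intro x
  simp only [Equiv.prodCongr_apply, Equiv.coe_refl, Prod.map, Equiv.coe_fn_mk, id]
  rw [update_extEquiv, extEquiv_apply_self]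
  simp only [extEquiv, Equiv.coe_fn_mk, Pi.star_apply, Complex.star_def]
  ring

lemma trace_rdm (c : (Fin m → Fin q) → ℂ) (a : Fin m) :
    (rdm c a).trace = ((∑ j, ‖c j‖ ^ 2 : ℝ) : ℂ) := by
  rw [Matrix.trace]
  push_cast
  rw [← (extEquiv (q := q) a).sum_comp (fun j => ((‖c j‖ : ℂ)) ^ 2), Fintype.sum_prod_type]
  congr 1; funext i
  rw [Matrix.diag]
  simp only [rdm, Matrix.of_apply]
  congr 1; funext g
  rw [mul_comm, conj_mul_self_eq']
  simp only [extEquiv, Equiv.coe_fn_mk]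

section Chain
variable (φ : Fin m → Fin q → ℂ)

/-- iterated projectors at sites `0, 1, ..., k-1` -/
noncomputable def chain (v : (Fin m → Fin q) → ℂ) : ℕ → ((Fin m → Fin q) → ℂ)
  | 0 => v
  | (k+1) => if h : k < m then p ⟨k, h⟩ (φ ⟨k, h⟩) (chain v k) else chain v k

lemma chain_comm (v : (Fin m → Fin q) → ℂ) (k : ℕ) (b : Fin m) (hb : k ≤ (b : ℕ))
    (ψ : Fin q → ℂ) : p b ψ (chain φ v k) = chain φ (p b ψ v) k := by
  induction k with
  | zero => rfl
  | succ k ih =>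
    rw [chain, chain]
    by_cases h : k < m
    · rw [dif_pos h, dif_pos h, ← ih (Nat.le_of_succ_le hb),
        p_comm (a := (⟨k, h⟩ : Fin m)) (b := b) ?_]
      intro hc
      have : (b : ℕ) = k := by rw [← hc]
      omega
    · rw [dif_neg h, dif_neg h, ih (Nat.le_of_succ_le hb)]

lemma chain_sub (v w : (Fin m → Fin q) → ℂ) (k : ℕ) :
    chain φ (v - w) k = chain φ v k - chain φ w k := by
  induction k with
  | zero => rfl
  | succ k ih =>
    rw [chain, chain, chain]
    by_cases h : k < m
    · rw [dif_pos h, dif_pos h, dif_pos h, ih, p_sub]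
    · rw [dif_neg h, dif_neg h, dif_neg h, ih]

lemma chain_contract (hφ : ∀ a, ∑ i, ‖φ a i‖ ^ 2 = 1) (v : (Fin m → Fin q) → ℂ) (k : ℕ) :
    nsq (chain φ v k) ≤ nsq v := by
  induction k with
  | zero => exact le_refl _
  | succ k ih =>
    rw [chain]
    by_cases h : k < m
    · rw [dif_pos h]
      exact le_trans (nsq_p_le _ _ (hφ _) _) ih
    · rw [dif_neg h]; exact ih

/-- the overlap with the top eigenvector at site `t` -/
noncomputable def lam (c : (Fin m → Fin q) → ℂ) (t : ℕ) : ℝ :=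
  if h : t < m then (ip c (p ⟨t, h⟩ (φ ⟨t, h⟩) c)).re else 0

lemma chain_nsq_ge (hφ : ∀ a, ∑ i, ‖φ a i‖ ^ 2 = 1) (c : (Fin m → Fin q) → ℂ)
    (hc : nsq c = 1) (k : ℕ) :
    1 - ∑ t ∈ Finset.range k, (1 - lam φ c t) ≤ nsq (chain φ c k) := by
  induction k with
  | zero => simp [chain, hc]
  | succ k ih =>
    rw [Finset.sum_range_succ, chain]
    by_cases h : k < m
    · rw [dif_pos h]
      set b : Fin m := ⟨k, h⟩
      have key : chain φ c k - p b (φ b) (chain φ c k) = chain φ (c - p b (φ b) c) k := by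
        rw [chain_sub, chain_comm φ c k b (le_refl _)]
      have h1 : nsq (chain φ c k) - nsq (p b (φ b) (chain φ c k))
          = nsq (chain φ (c - p b (φ b) c) k) := by
        rw [← key, nsq_sub_p b (φ b) (hφ b)]
      have h2 : nsq (chain φ (c - p b (φ b) c) k) ≤ nsq (c - p b (φ b) c) :=
        chain_contract φ hφ _ k
      have h3 : nsq (c - p b (φ b) c) = 1 - lam φ c k := by
        rw [nsq_sub_p b (φ b) (hφ b), hc, lam, dif_pos h, re_ip_p_self b (φ b) (hφ b)]
      linarith
    · rw [dif_neg h]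
      have : lam φ c k = 0 := by rw [lam, dif_neg h]
      linarith

/-- partial product of the `φ` values at sites `< k` -/
noncomputable def phiPre (k : ℕ) (j : Fin m → Fin q) : ℂ :=
  ∏ a : Fin m, if (a : ℕ) < k then φ a (j a) else 1

lemma chain_closed_form (c : (Fin m → Fin q) → ℂ) :
    ∀ k, k ≤ m → ∀ j, chain φ c k j = phiPre φ k j *
      ∑ j', (if ∀ b : Fin m, k ≤ (b : ℕ) → j b = j' b then 1 else 0) *
        ((starRingEnd ℂ) (phiPre φ k j') * c j') := by
  intro k
  induction k with
  | zero =>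
    intro _ j
    have h1 : phiPre φ 0 = fun _ => 1 := by
      funext j'; rw [phiPre]; simp
    rw [h1]
    simp only [map_one, one_mul]
    rw [Finset.sum_eq_single j]
    · simp [chain]
    · intro j' _ hne
      rw [if_neg, zero_mul]
      intro hall
      exact hne (funext fun b => (hall b (Nat.zero_le _)).symm)
    · intro hj; exact absurd (Finset.mem_univ j) hj
  | succ k ih =>
    intro hk j
    have hkm : k < m := hk
    rw [chain, dif_pos hkm]
    set b : Fin m := ⟨k, hkm⟩
    rw [p]
    have hkm' : k ≤ m := Nat.le_of_succ_le hk
    have hbv : (b : ℕ) = k := rfl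
    have F1 : ∀ i, phiPre φ k (Function.update j b i) = phiPre φ k j := by
      intro i; unfold phiPre; apply Finset.prod_congr rfl; intro a _
      by_cases ha : (a : ℕ) < k
      · have hab : a ≠ b := by intro h; rw [h, hbv] at ha; omega
        rw [if_pos ha, if_pos ha, Function.update_of_ne hab]
      · rw [if_neg ha, if_neg ha]
    have F2 : ∀ jj : Fin m → Fin q, phiPre φ (k+1) jj = φ b (jj b) * phiPre φ k jj := by
      intro jj; unfold phiPre
      have hsplit : ∀ a : Fin m, (if (a : ℕ) < k + 1 then φ a (jj a) else 1)
          = (if a = b then φ b (jj b) else 1) * (if (a : ℕ) < k then φ a (jj a) else 1) := by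
        intro a
        by_cases hab : a = b
        · subst hab
          rw [if_pos (by omega), if_pos rfl, if_neg (by rw [hbv]; omega), mul_one]
        · have hv : (a : ℕ) ≠ k := fun h => hab (Fin.ext (h.trans hbv.symm))
          by_cases ha : (a : ℕ) < k
          · rw [if_pos (by omega), if_neg hab, if_pos ha, one_mul]
          · rw [if_neg (by omega), if_neg hab, if_neg ha, one_mul]
      rw [Finset.prod_congr rfl (fun a _ => hsplit a), Finset.prod_mul_distrib,
        Finset.prod_ite_eq' Finset.univ b (fun _ => φ b (jj b)), if_pos (Finset.mem_univ b)]
    have F3 : ∀ (i : Fin q) (j' : Fin m → Fin q),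
        (∀ b' : Fin m, k ≤ (b' : ℕ) → Function.update j b i b' = j' b')
          ↔ (j' b = i ∧ ∀ b' : Fin m, k + 1 ≤ (b' : ℕ) → j b' = j' b') := by
      intro i j'; constructor
      · intro h
        refine ⟨?_, ?_⟩
        · have := h b (by omega)
          rw [Function.update_self] at this; exact this.symm
        · intro b' hb'
          have hne : b' ≠ b := by intro he; rw [he, hbv] at hb'; omega
          have := h b' (by omega)
          rwa [Function.update_of_ne hne] at this
      · rintro ⟨h1, h2⟩ b' hb'
        by_cases he : b' = b
        · subst he; rw [Function.update_self]; exact h1.symm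
        · have hv : (b' : ℕ) ≠ k := fun h => he (Fin.ext (h.trans hbv.symm))
          rw [Function.update_of_ne he]; exact h2 b' (by omega)
    have F4 : ∀ (A B : Prop) [Decidable A] [Decidable B],
        (if A ∧ B then (1:ℂ) else 0) = (if A then (1:ℂ) else 0) * (if B then (1:ℂ) else 0) := by
      intro A B dA dB
      by_cases hA : A <;> by_cases hB : B <;> simp [hA, hB]
    simp only [ih hkm', F1, F3, F4]
    simp only [Finset.mul_sum]
    rw [Finset.sum_comm]
    apply Finset.sum_congr rfl
    intro j' _
    rw [Finset.sum_eq_single (j' b)]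
    · rw [if_pos rfl, F2 j', F2 j]
      simp only [map_mul]
      ring
    · intro i _ hne
      simp only [if_neg (show ¬ j' b = i from fun h => hne h.symm), zero_mul, mul_zero]
    · intro h; exact absurd (Finset.mem_univ _) h

end Chain

section Last
variable {n : ℕ} (φ : Fin (n+1) → Fin q → ℂ) (c : (Fin (n+1) → Fin q) → ℂ)

/-- product of the φ's over the non-last sites -/
noncomputable def bigPhi : ({ b : Fin (n+1) // b ≠ Fin.last n } → Fin q) → ℂ :=
  fun g => ∏ b : { b : Fin (n+1) // b ≠ Fin.last n }, φ b.1 (g b)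

/-- the reduced vector at the last site -/
noncomputable def chiv : Fin q → ℂ :=
  fun i => ∑ g, (starRingEnd ℂ) (bigPhi φ g) * c (extEquiv (Fin.last n) (i, g))

lemma restr_ext (i : Fin q) (g : { b : Fin (n+1) // b ≠ Fin.last n } → Fin q) :
    (fun b : { b : Fin (n+1) // b ≠ Fin.last n } => extEquiv (Fin.last n) (i, g) b.1) = g := by
  funext b
  simp only [extEquiv, Equiv.coe_fn_mk, dif_neg b.2]

lemma phiPre_n (j : Fin (n+1) → Fin q) :
    phiPre φ n j = bigPhi φ (fun b => j b.1) := by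
  rw [phiPre, bigPhi, ← Finset.prod_filter,
    Finset.prod_subtype (Finset.univ.filter (fun a : Fin (n+1) => (a : ℕ) < n))
      (p := fun a : Fin (n+1) => a ≠ Fin.last n) ?_ (fun a => φ a (j a))]
  intro x
  simp only [Finset.mem_filter, Finset.mem_univ, true_and, Ne, Fin.ext_iff, Fin.val_last]
  omega

lemma cond_last (j j' : Fin (n+1) → Fin q) :
    (∀ b : Fin (n+1), n ≤ (b : ℕ) → j b = j' b) ↔ j' (Fin.last n) = j (Fin.last n) := by
  constructor
  · intro h; exact (h (Fin.last n) (by simp)).symm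
  · intro h b hb
    have : b = Fin.last n := Fin.ext (by have := b.isLt; simp; omega)
    rw [this]; exact h.symm

lemma chain_last_apply (j : Fin (n+1) → Fin q) :
    chain φ c n j = phiPre φ n j * chiv φ c (j (Fin.last n)) := by
  rw [chain_closed_form φ c n (Nat.le_succ n) j]
  congr 1
  rw [chiv, ← (extEquiv (q := q) (Fin.last n)).sum_comp
    (fun j' => (if ∀ b : Fin (n+1), n ≤ (b : ℕ) → j b = j' b then (1:ℂ) else 0) *
      ((starRingEnd ℂ) (phiPre φ n j') * c j')), Fintype.sum_prod_type]
  rw [Finset.sum_eq_single (j (Fin.last n))]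
  · apply Finset.sum_congr rfl
    intro g _
    rw [if_pos, phiPre_n, restr_ext, one_mul]
    rw [cond_last]
    simp [extEquiv]
  · intro i _ hne
    apply Finset.sum_eq_zero
    intro g _
    rw [if_neg, zero_mul]
    rw [cond_last]
    simpa [extEquiv] using hne
  · intro h; exact absurd (Finset.mem_univ _) h

lemma sum_bigPhi_sq (hφ : ∀ a, ∑ i, ‖φ a i‖ ^ 2 = 1) :
    ∑ g, ‖bigPhi φ g‖ ^ 2 = 1 := by
  have h1 : ∀ g, ‖bigPhi φ g‖ ^ 2 = ∏ b : { b : Fin (n+1) // b ≠ Fin.last n }, ‖φ b.1 (g b)‖ ^ 2 := by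
    intro g
    rw [bigPhi, norm_prod, ← Finset.prod_pow]
  simp only [h1]
  rw [← Fintype.piFinset_univ,
    Finset.sum_prod_piFinset Finset.univ (fun (b : { b : Fin (n+1) // b ≠ Fin.last n }) y => ‖φ b.1 y‖ ^ 2)]
  exact Finset.prod_eq_one (fun b _ => hφ b.1)

lemma nsq_chain_last (hφ : ∀ a, ∑ i, ‖φ a i‖ ^ 2 = 1) :
    nsq (chain φ c n) = ∑ i, ‖chiv φ c i‖ ^ 2 := by
  rw [nsq]
  simp only [chain_last_apply φ c]
  rw [← (extEquiv (q := q) (Fin.last n)).sum_comp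
    (fun j => ‖phiPre φ n j * chiv φ c (j (Fin.last n))‖ ^ 2), Fintype.sum_prod_type]
  have h1 : ∀ (i : Fin q) (g : { b : Fin (n+1) // b ≠ Fin.last n } → Fin q),
      ‖phiPre φ n (extEquiv (Fin.last n) (i, g)) * chiv φ c ((extEquiv (Fin.last n) (i, g)) (Fin.last n))‖ ^ 2
      = ‖bigPhi φ g‖ ^ 2 * ‖chiv φ c i‖ ^ 2 := by
    intro i g
    rw [norm_mul, mul_pow, phiPre_n, restr_ext]
    congr 2
    simp [extEquiv]
  simp only [h1]
  rw [Finset.sum_comm]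
  simp only [← Finset.mul_sum]
  rw [← Finset.sum_mul, sum_bigPhi_sq φ hφ, one_mul]

open Matrix in
lemma quad_chi (hφ : ∀ a, ∑ i, ‖φ a i‖ ^ 2 = 1) :
    (∑ i, ‖chiv φ c i‖ ^ 2) ^ 2
      ≤ (star (chiv φ c) ⬝ᵥ ((rdm c (Fin.last n)) *ᵥ (chiv φ c))).re := by
  set χ := chiv φ c with hχ
  set z : ({ b : Fin (n+1) // b ≠ Fin.last n } → Fin q) → ℂ :=
    fun g => ∑ i, (starRingEnd ℂ) (χ i) * c (extEquiv (Fin.last n) (i, g)) with hz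
  have h1 : star χ ⬝ᵥ ((rdm c (Fin.last n)) *ᵥ χ) = ∑ g, ((‖z g‖ : ℂ)) ^ 2 := by
    simp only [dotProduct, Matrix.mulVec, dotProduct, rdm, Matrix.of_apply,
      Pi.star_apply, Finset.mul_sum, Finset.sum_mul]
    have hg : ∀ g : { b : Fin (n+1) // b ≠ Fin.last n } → Fin q, ((‖z g‖ : ℂ)) ^ 2
        = ∑ x : Fin q, ∑ x1 : Fin q, star (χ x) *
            ((c fun b => if h : b = Fin.last n then x else g ⟨b, h⟩) *
              (starRingEnd ℂ) (c fun b => if h : b = Fin.last n then x1 else g ⟨b, h⟩) * χ x1) := by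
      intro g
      rw [← conj_mul_self_eq' (z g), mul_comm]
      have hzg : z g = ∑ x : Fin q, (starRingEnd ℂ) (χ x) *
          (c fun b => if h : b = Fin.last n then x else g ⟨b, h⟩) := rfl
      rw [hzg, map_sum, Finset.sum_mul_sum]
      apply Finset.sum_congr rfl; intro x _
      apply Finset.sum_congr rfl; intro x1 _
      simp only [_root_.map_mul, starRingEnd_self_apply, Complex.star_def]
      ring
    simp only [hg]
    have hswap : ∀ (f : Fin q → Fin q → ({ b : Fin (n+1) // b ≠ Fin.last n } → Fin q) → ℂ),
        ∑ x, ∑ x1, ∑ g, f x x1 g = ∑ g, ∑ x, ∑ x1, f x x1 g := by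
      intro f
      have h1 : ∀ x, ∑ x1, ∑ g, f x x1 g = ∑ g, ∑ x1, f x x1 g := fun x => Finset.sum_comm
      simp only [h1]
      exact Finset.sum_comm
    rw [hswap]
  have h2 := csum (fun g => bigPhi φ g) z
  rw [sum_bigPhi_sq φ hφ, one_mul] at h2
  have h3 : ∑ g, (starRingEnd ℂ) (bigPhi φ g) * z g = ((∑ i, ‖χ i‖ ^ 2 : ℝ) : ℂ) := by
    calc ∑ g, (starRingEnd ℂ) (bigPhi φ g) * z g
        = ∑ g, ∑ i, (starRingEnd ℂ) (bigPhi φ g) *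
            ((starRingEnd ℂ) (χ i) * c (extEquiv (Fin.last n) (i, g))) := by
          simp only [hz, Finset.mul_sum]
      _ = ∑ i, ∑ g, (starRingEnd ℂ) (χ i) *
            ((starRingEnd ℂ) (bigPhi φ g) * c (extEquiv (Fin.last n) (i, g))) := by
          rw [Finset.sum_comm]
          exact Finset.sum_congr rfl fun i _ => Finset.sum_congr rfl fun g _ => by ring
      _ = ∑ i, (starRingEnd ℂ) (χ i) * χ i := by
          simp only [← Finset.mul_sum]
          rfl
      _ = ((∑ i, ‖χ i‖ ^ 2 : ℝ) : ℂ) := by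
          push_cast
          exact Finset.sum_congr rfl fun i _ => conj_mul_self_eq' _
  have h4 : (star χ ⬝ᵥ ((rdm c (Fin.last n)) *ᵥ χ)).re = ∑ g, ‖z g‖ ^ 2 := by
    rw [h1, Complex.re_sum]
    exact Finset.sum_congr rfl fun g _ => by
      rw [← Complex.ofReal_pow, Complex.ofReal_re]
  have h5 : ‖((∑ i, ‖χ i‖ ^ 2 : ℝ) : ℂ)‖ = ∑ i, ‖χ i‖ ^ 2 := by
    rw [Complex.norm_real]
    exact abs_of_nonneg (Finset.sum_nonneg fun i _ => by positivity)
  calc (∑ i, ‖χ i‖ ^ 2) ^ 2 = ‖∑ g, (starRingEnd ℂ) (bigPhi φ g) * z g‖ ^ 2 := by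
        rw [h3, h5]
    _ ≤ ∑ g, ‖z g‖ ^ 2 := h2
    _ = _ := h4.symm

end Last
end QRDM

/-- `l` lists the eigenvalues of the Hermitian matrix `M` in increasing order. -/
def IsOrderedSpectrum {d : ℕ} (M : Matrix (Fin d) (Fin d) ℂ) (l : Fin d → ℝ) : Prop :=
  Monotone l ∧ ∃ hM : M.IsHermitian, ∃ σ : Equiv.Perm (Fin d),
    ∀ i, l i = hM.eigenvalues (σ i)

open Matrix QRDM

/-- Theorem 3 of the paper: for an `(n+1)`-qudit pure state (`n + 1 ≥ 2` qudits, local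
dimension `d + 1 ≥ 1`), the sum over the first `n` qudits of the `d` smallest eigenvalues
of the reduced density matrices dominates the sum of the `d` smallest eigenvalues of the
reduced density matrix of the last qudit. -/
theorem qudit_rdm_sum_ineq (n d : ℕ) (hn : 1 ≤ n)
    (c : (Fin (n + 1) → Fin (d + 1)) → ℂ)
    (hnorm : ∑ j : Fin (n + 1) → Fin (d + 1), ‖c j‖ ^ 2 = 1)
    (l : Fin (n + 1) → Fin (d + 1) → ℝ)
    (hl : ∀ a, IsOrderedSpectrum (rdm c a) (l a)) :
    ∑ i : Fin d, l (Fin.last n) i.castSucc ≤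
      ∑ a : Fin n, ∑ i : Fin d, l a.castSucc i.castSucc := by
  have hmono : ∀ a, Monotone (l a) := fun a => (hl a).1
  have hherm : ∀ a, (rdm c a).IsHermitian := fun a => (hl a).2.choose
  have hσ : ∀ a, ∃ σ : Equiv.Perm (Fin (d+1)), ∀ i, l a i = (hherm a).eigenvalues (σ i) := by
    intro a
    obtain ⟨hM, σ, hs⟩ := (hl a).2
    exact ⟨σ, fun i => hs i⟩
  choose σ hspec using hσ
  -- basic spectral facts
  have sum_l : ∀ a, ∑ i, l a i = 1 := by
    intro a
    have h1 : (∑ i, (hherm a).eigenvalues i : ℂ) = (rdm c a).trace := sum_eig_eq_trace _ _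
    rw [trace_rdm, hnorm] at h1
    have h2 : ∑ i, l a i = ∑ i, (hherm a).eigenvalues i := by
      rw [Finset.sum_congr rfl fun i _ => hspec a i]
      exact Equiv.sum_comp (σ a) _
    have h3 : (∑ i, (hherm a).eigenvalues i : ℝ) = 1 := by exact_mod_cast h1
    rw [h2, h3]
  have eig_le : ∀ a i, (hherm a).eigenvalues i ≤ l a (Fin.last d) := by
    intro a i
    have : (hherm a).eigenvalues i = l a ((σ a).symm i) := by
      rw [hspec a, Equiv.apply_symm_apply]
    rw [this]
    exact hmono a (Fin.le_last _)
  have partial_sum : ∀ a, ∑ i : Fin d, l a i.castSucc = 1 - l a (Fin.last d) := by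
    intro a
    have := Fin.sum_univ_castSucc (f := l a)
    rw [sum_l a] at this
    linarith
  -- eigenvector choices
  set φ : Fin (n+1) → Fin (d+1) → ℂ :=
    fun b => ⇑((hherm b).eigenvectorBasis (σ b (Fin.last d))) with hφdef
  have hunit : ∀ b, ∑ i, ‖φ b i‖ ^ 2 = 1 := by
    intro b
    have hb := (hherm b).eigenvectorBasis.orthonormal.1 (σ b (Fin.last d))
    have : ‖(hherm b).eigenvectorBasis (σ b (Fin.last d))‖ ^ 2
        = ∑ i, ‖φ b i‖ ^ 2 := by
      rw [EuclideanSpace.norm_eq, Real.sq_sqrt (by positivity)]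
    rw [← this, hb, one_pow]
  have lamval : ∀ (t : ℕ) (h : t < n + 1), lam φ c t = l ⟨t, h⟩ (Fin.last d) := by
    intro t h
    rw [lam, dif_pos h]
    set b : Fin (n+1) := ⟨t, h⟩
    rw [quadForm c b (φ b)]
    have hmv : rdm c b *ᵥ φ b = (hherm b).eigenvalues (σ b (Fin.last d)) • φ b :=
      (hherm b).mulVec_eigenvectorBasis (σ b (Fin.last d))
    rw [hmv, dotProduct_smul]
    have hφφ : star (φ b) ⬝ᵥ φ b = ((1 : ℝ) : ℂ) := by
      rw [dotProduct]
      rw [← hunit b]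
      push_cast
      exact Finset.sum_congr rfl fun i _ => conj_mul_self_eq' _
    rw [hφφ]
    rw [hspec b (Fin.last d)]
    simp [Complex.real_smul]
  -- the chain bound
  have hc1 : nsq c = 1 := hnorm
  have hchain := chain_nsq_ge φ hunit c hc1 n
  rw [nsq_chain_last φ c hunit] at hchain
  set S : ℝ := ∑ i, ‖chiv φ c i‖ ^ 2 with hS
  have hSnn : 0 ≤ S := Finset.sum_nonneg fun i _ => by positivity
  set μ : ℝ := l (Fin.last n) (Fin.last d) with hμdef
  have hμpos : 0 ≤ μ := by
    have h1 : (1:ℝ) = ∑ i, l (Fin.last n) i := (sum_l _).symm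
    have h2 : ∑ i, l (Fin.last n) i ≤ ∑ _i : Fin (d+1), μ :=
      Finset.sum_le_sum fun i _ => hmono _ (Fin.le_last _)
    rw [Finset.sum_const, Finset.card_univ, Fintype.card_fin, nsmul_eq_mul] at h2
    nlinarith
  have hray : (star (chiv φ c) ⬝ᵥ ((rdm c (Fin.last n)) *ᵥ (chiv φ c))).re ≤ μ * S :=
    rayleigh_le _ (hherm (Fin.last n)) μ (eig_le (Fin.last n)) _
  have hquad := quad_chi φ c hunit
  have hSle : S ≤ μ := by
    rcases eq_or_lt_of_le hSnn with h0 | h0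
    · rw [← h0]; exact hμpos
    · have : S ^ 2 ≤ μ * S := le_trans hquad hray
      nlinarith
  -- sum over range
  have hrange : ∑ t ∈ Finset.range n, (1 - lam φ c t)
      = ∑ a : Fin n, (1 - l a.castSucc (Fin.last d)) := by
    rw [← Fin.sum_univ_eq_sum_range]
    apply Finset.sum_congr rfl
    intro a _
    congr 1
    have hlt : (a : ℕ) < n + 1 := by omega
    rw [lamval a hlt]
    congr 1
  rw [hrange] at hchain
  -- conclude
  rw [partial_sum]
  have : ∑ a : Fin n, ∑ i : Fin d, l a.castSucc i.castSucc
      = ∑ a : Fin n, (1 - l a.castSucc (Fin.last d)) :=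
    Finset.sum_congr rfl fun a _ => partial_sum _
  rw [this]
  linarith
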